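/- For any field K, the centralizer of PSL(2, K) in PΓL(2, K) = PGL(2, K) ⋊ Aut(K) is trivial; in particular, any group G with PSL(2, K) ≤ G ≤ PΓL(2, K) is centerless. -/

import Mathlib

open Matrix

variable (K : Type*) [Field K]

/-- `GL(2, K)`. -/
abbrev GL2 := Matrix.GeneralLinearGroup (Fin 2) K

/-- `PGL(2, K) = GL(2, K)/Z(GL(2, K))`. -/
abbrev PGL2 := GL2 K ⧸ Subgroup.center (GL2 K)

/-- An isomorphism of groups maps the center onto the center. -/
theorem mapCenterEq {G H : Type*} [Group G] [Group H] (e : G ≃* H) :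
    (Subgroup.center G).map e.toMonoidHom = Subgroup.center H := by
  ext x
  constructor
  · rintro ⟨y, hy, rfl⟩
    rw [SetLike.mem_coe, Subgroup.mem_center_iff] at hy
    rw [Subgroup.mem_center_iff]
    intro h
    simpa using congrArg e (hy (e.symm h))
  · intro hx
    rw [Subgroup.mem_center_iff] at hx
    refine ⟨e.symm x, ?_, e.apply_symm_apply x⟩
    rw [SetLike.mem_coe, Subgroup.mem_center_iff]
    intro g
    simpa using congrArg e.symm (hx (e g))

/-- The action of a field automorphism on `GL(2, K)`, entrywise. -/
def glMapEquiv (σ : K ≃+* K) : GL2 K ≃* GL2 K :=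
  Units.mapEquiv (RingEquiv.mapMatrix σ).toMulEquiv

/-- The induced action of a field automorphism on `PGL(2, K)`. -/
def pglAut (σ : K ≃+* K) : PGL2 K ≃* PGL2 K :=
  QuotientGroup.congr _ _ (glMapEquiv K σ) (mapCenterEq _)

/-- The homomorphism `Aut(K) → Aut(PGL(2, K))`. -/
def pglAutHom : RingAut K →* MulAut (PGL2 K) where
  toFun σ := pglAut K σ
  map_one' := by
    ext x
    refine QuotientGroup.induction_on x ?_
    intro g
    rfl
  map_mul' σ τ := by
    ext x
    refine QuotientGroup.induction_on x ?_
    intro g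
    rfl

/-- `PΓL(2, K) = PGL(2, K) ⋊ Aut(K)`. -/
abbrev PGammaL := SemidirectProduct (PGL2 K) (RingAut K) (pglAutHom K)

/-- The embedding of `PSL(2, K)` (as the image of `SL(2, K)`) into `PΓL(2, K)`. -/
def pslToPGammaL : Matrix.SpecialLinearGroup (Fin 2) K →* PGammaL K :=
  SemidirectProduct.inl.comp
    ((QuotientGroup.mk' (Subgroup.center (GL2 K))).comp
      Matrix.SpecialLinearGroup.toGL)

def Et (t : K) : Matrix.SpecialLinearGroup (Fin 2) K :=
  ⟨!![1, t; 0, 1], by simp [Matrix.det_fin_two_of]⟩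

def Ft (t : K) : Matrix.SpecialLinearGroup (Fin 2) K :=
  ⟨!![1, 0; t, 1], by simp [Matrix.det_fin_two_of]⟩

lemma central_scalar (z : GL2 K) (hz : z ∈ Subgroup.center (GL2 K)) :
    (z : Matrix (Fin 2) (Fin 2) K) = (z : Matrix (Fin 2) (Fin 2) K) 0 0 • 1 := by
  have hc := Subgroup.mem_center_iff.mp hz
  have h1 : (z : Matrix (Fin 2) (Fin 2) K) * !![1,1;0,1] = !![1,1;0,1] * (z : Matrix (Fin 2) (Fin 2) K) := by
    have := congrArg Units.val (hc ((Et K 1).toGL)).symm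
    simpa [Et, Matrix.SpecialLinearGroup.toGL] using this
  have h2 : (z : Matrix (Fin 2) (Fin 2) K) * !![1,0;1,1] = !![1,0;1,1] * (z : Matrix (Fin 2) (Fin 2) K) := by
    have := congrArg Units.val (hc ((Ft K 1).toGL)).symm
    simpa [Ft, Matrix.SpecialLinearGroup.toGL] using this
  set M := (z : Matrix (Fin 2) (Fin 2) K) with hM
  have e00 := congrFun (congrFun h1 0 : _) 1
  have e10 := congrFun (congrFun h1 1 : _) 0
  have e11 := congrFun (congrFun h1 1 : _) 1
  have f00 := congrFun (congrFun h2 0 : _) 0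
  simp [Matrix.mul_apply, Fin.sum_univ_two] at e00 e10 e11 f00
  have h01 : M 0 1 = 0 := by linear_combination f00
  have h00 : M 0 0 = M 1 1 := by linear_combination e00
  ext i j
  fin_cases i <;> fin_cases j <;>
    simp [Matrix.smul_apply, Matrix.one_apply, h01, e11, h00]

lemma scalar_central (u : GL2 K) (r : K) (hu : (u : Matrix (Fin 2) (Fin 2) K) = r • 1) :
    u ∈ Subgroup.center (GL2 K) := by
  rw [Subgroup.mem_center_iff]
  intro g
  ext : 1
  show (g : Matrix (Fin 2) (Fin 2) K) * u = (u : Matrix (Fin 2) (Fin 2) K) * g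
  rw [hu, Matrix.mul_smul, Matrix.smul_mul, Matrix.mul_one, Matrix.one_mul]

lemma key (σ : K ≃+* K) (A : GL2 K)
    (h : ∀ S : Matrix.SpecialLinearGroup (Fin 2) K, ∃ r : K,
      r • ((A : Matrix (Fin 2) (Fin 2) K) * ((S : Matrix (Fin 2) (Fin 2) K).map σ))
        = (S : Matrix (Fin 2) (Fin 2) K) * (A : Matrix (Fin 2) (Fin 2) K)) :
    (∀ t : K, σ t = t) ∧
      (A : Matrix (Fin 2) (Fin 2) K) = (A : Matrix (Fin 2) (Fin 2) K) 0 0 • 1 := by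
  set M := (A : Matrix (Fin 2) (Fin 2) K) with hMdef
  set a := M 0 0; set b := M 0 1; set c := M 1 0; set d := M 1 1
  have hdet : a * d - b * c ≠ 0 := by
    have : IsUnit M.det := (Matrix.isUnit_iff_isUnit_det M).mp A.isUnit
    rw [Matrix.det_fin_two] at this
    exact this.ne_zero
  have hc : c = 0 := by
    obtain ⟨r, hr⟩ := h (Et K 1)
    have E00 := congrFun (congrFun hr 0 : _) 0
    have E10 := congrFun (congrFun hr 1 : _) 0
    simp [Et, Matrix.mul_apply, Fin.sum_univ_two, Matrix.map_apply] at E00 E10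
    rcases eq_or_ne r 1 with h1 | h1
    · subst h1; linear_combination -E00
    · have : c * (r - 1) = 0 := by linear_combination E10
      rcases mul_eq_zero.mp this with h' | h'
      · exact h'
      · exact absurd (sub_eq_zero.mp h') h1
  have ha : a ≠ 0 := fun h' => hdet (by rw [h', hc]; ring)
  have hd : d ≠ 0 := fun h' => hdet (by rw [h', hc]; ring)
  have key2 : ∀ t : K, a * σ t = t * d := by
    intro t
    obtain ⟨r, hr⟩ := h (Et K t)
    have E01 := congrFun (congrFun hr 0 : _) 1
    have E11 := congrFun (congrFun hr 1 : _) 1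
    simp [Et, Matrix.mul_apply, Fin.sum_univ_two, Matrix.map_apply] at E01 E11
    have hr1 : r = 1 := by
      have : d * (r - 1) = 0 := by linear_combination E11 - r * σ t * hc
      rcases mul_eq_zero.mp this with h' | h'
      · exact absurd h' hd
      · exact sub_eq_zero.mp h'
    subst hr1
    linear_combination E01
  have had : a = d := by simpa using key2 1
  have hb : b = 0 := by
    obtain ⟨r, hr⟩ := h (Ft K 1)
    have F01 := congrFun (congrFun hr 0 : _) 1
    have F11 := congrFun (congrFun hr 1 : _) 1
    simp [Ft, Matrix.mul_apply, Fin.sum_univ_two, Matrix.map_apply] at F01 F11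
    rcases eq_or_ne r 1 with h1 | h1
    · subst h1; linear_combination -F11
    · have : b * (r - 1) = 0 := by linear_combination F01
      rcases mul_eq_zero.mp this with h' | h'
      · exact h'
      · exact absurd (sub_eq_zero.mp h') h1
  refine ⟨fun t => mul_left_cancel₀ ha ?_, ?_⟩
  · rw [key2 t, had, mul_comm]
  · ext i j
    fin_cases i <;> fin_cases j
    · simp; rfl
    · simpa using hb
    · simpa using hc
    · simpa using had.symm


theorem stmt4 :
    (∀ g : PGammaL K,
        (∀ s : Matrix.SpecialLinearGroup (Fin 2) K,
          g * pslToPGammaL K s = pslToPGammaL K s * g) → g = 1) ∧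
    ∀ G : Subgroup (PGammaL K), (pslToPGammaL K).range ≤ G →
      Subgroup.center ↥G = ⊥ := by
  have part1 : ∀ g : PGammaL K,
      (∀ s : Matrix.SpecialLinearGroup (Fin 2) K,
        g * pslToPGammaL K s = pslToPGammaL K s * g) → g = 1 := by
    intro g hg
    obtain ⟨A, hA⟩ := QuotientGroup.mk'_surjective (Subgroup.center (GL2 K)) g.left
    set σ := g.right with hσdef
    have hcomm : ∀ S : Matrix.SpecialLinearGroup (Fin 2) K, ∃ r : K,
        r • ((A : Matrix (Fin 2) (Fin 2) K) * ((S : Matrix (Fin 2) (Fin 2) K).map σ))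
          = (S : Matrix (Fin 2) (Fin 2) K) * (A : Matrix (Fin 2) (Fin 2) K) := by
      intro S
      have h1 := congrArg SemidirectProduct.left (hg S)
      simp only [SemidirectProduct.mul_left, pslToPGammaL, MonoidHom.comp_apply,
        SemidirectProduct.left_inl, SemidirectProduct.right_inl, _root_.map_one,
        MulAut.one_apply] at h1
      rw [← hA] at h1
      have h2 : (pglAutHom K σ) (QuotientGroup.mk' (Subgroup.center (GL2 K)) S.toGL)
          = QuotientGroup.mk' (Subgroup.center (GL2 K)) (glMapEquiv K σ S.toGL) := rfl
      rw [h2, ← _root_.map_mul, ← _root_.map_mul] at h1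
      obtain ⟨z, hz, hzeq⟩ := (QuotientGroup.mk'_eq_mk' _).mp h1
      refine ⟨(z : Matrix (Fin 2) (Fin 2) K) 0 0, ?_⟩
      have hzv := central_scalar K z hz
      have hval := congrArg Units.val hzeq
      simp only [Units.val_mul] at hval
      rw [hzv] at hval
      have hmap : ((glMapEquiv K σ S.toGL) : Matrix (Fin 2) (Fin 2) K)
          = (S : Matrix (Fin 2) (Fin 2) K).map σ := rfl
      rw [hmap] at hval
      rw [Matrix.mul_smul, Matrix.mul_one] at hval
      exact hval
    obtain ⟨hσ, hAs⟩ := key K σ A hcomm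
    have hgr : g.right = 1 := by
      ext t
      exact hσ t
    have hgl : g.left = 1 := by
      rw [← hA, QuotientGroup.mk'_apply, QuotientGroup.eq_one_iff]
      exact scalar_central K A _ hAs
    exact SemidirectProduct.ext hgl hgr
  refine ⟨part1, ?_⟩
  intro G hG
  rw [eq_bot_iff]
  intro x hx
  have hc := Subgroup.mem_center_iff.mp hx
  have hx1 : (x : PGammaL K) = 1 := by
    apply part1
    intro s
    have hmem : pslToPGammaL K s ∈ G := hG ⟨s, rfl⟩
    have := hc ⟨pslToPGammaL K s, hmem⟩
    exact congrArg Subtype.val this.symm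
  simpa [Subgroup.mem_bot] using Subtype.ext hx1
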